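/- arXiv:1906.12245 — 2 statements merged into one kernel-verified Lean document; each statement's English description precedes it below -/
import Mathlib

section
/- For all nonnegative real numbers $u_1, u_2$, one has $(u_1^{7/3} - u_2^{7/3})(u_1 - u_2) \geq \tfrac12 (u_1^{4/3} + u_2^{4/3})(u_1 - u_2)^2$. -/
theorem stmt_0 (u₁ u₂ : ℝ) (h₁ : 0 ≤ u₁) (h₂ : 0 ≤ u₂) :
    (u₁ ^ ((7:ℝ)/3) - u₂ ^ ((7:ℝ)/3)) * (u₁ - u₂) ≥
      (1/2) * (u₁ ^ ((4:ℝ)/3) + u₂ ^ ((4:ℝ)/3)) * (u₁ - u₂) ^ 2 := by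
  set a := u₁ ^ ((1:ℝ)/3) with ha
  set b := u₂ ^ ((1:ℝ)/3) with hb
  have ha0 : 0 ≤ a := Real.rpow_nonneg h₁ _
  have hb0 : 0 ≤ b := Real.rpow_nonneg h₂ _
  have e1 : u₁ = a ^ 3 := by
    rw [ha, ← Real.rpow_natCast (u₁ ^ ((1:ℝ)/3)) 3, ← Real.rpow_mul h₁]; norm_num
  have e2 : u₂ = b ^ 3 := by
    rw [hb, ← Real.rpow_natCast (u₂ ^ ((1:ℝ)/3)) 3, ← Real.rpow_mul h₂]; norm_num
  have e3 : u₁ ^ ((7:ℝ)/3) = a ^ 7 := by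
    rw [ha, ← Real.rpow_natCast (u₁ ^ ((1:ℝ)/3)) 7, ← Real.rpow_mul h₁]; norm_num
  have e4 : u₂ ^ ((7:ℝ)/3) = b ^ 7 := by
    rw [hb, ← Real.rpow_natCast (u₂ ^ ((1:ℝ)/3)) 7, ← Real.rpow_mul h₂]; norm_num
  have e5 : u₁ ^ ((4:ℝ)/3) = a ^ 4 := by
    rw [ha, ← Real.rpow_natCast (u₁ ^ ((1:ℝ)/3)) 4, ← Real.rpow_mul h₁]; norm_num
  have e6 : u₂ ^ ((4:ℝ)/3) = b ^ 4 := by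
    rw [hb, ← Real.rpow_natCast (u₂ ^ ((1:ℝ)/3)) 4, ← Real.rpow_mul h₂]; norm_num
  rw [e3, e4, e5, e6]
  rw [e1, e2]
  have hc : 0 ≤ a^3 * b^3 * ((a - b) * (a^3 - b^3)) := by
    have h1 : (a - b) * (a^3 - b^3) = (a-b)^2 * (a^2 + a*b + b^2) := by ring
    have h2 : 0 ≤ a^2 + a*b + b^2 := by nlinarith [mul_nonneg ha0 hb0, sq_nonneg a, sq_nonneg b]
    rw [h1]
    positivity
  have hd : 0 ≤ (a^4 + b^4) * (a^3 - b^3)^2 := by positivity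
  nlinarith [hc, hd]
end

section
/- Let $\psi \in H^2_{\mathrm{loc}}(\mathbb{R}^3)$, let $\eta : \mathbb{R}^3 \to [0,1]$ be a $C^1$ function with $|\nabla \eta|^2 \leq c_\eta \eta$, and let $\xi(x) = e^{-\gamma|x-y|}$ with $0 < \gamma \leq 1$ and $y \in \mathbb{R}^3$. Assume $\eta^{1/2} \xi \nabla\psi, \ \eta \xi \partial_{ij}\psi, \ \eta^{1/2}\xi\Delta\psi \in L^2(\mathbb{R}^3)$ for all $i,j$, and that $\psi$, $\nabla\psi$, $\nabla^2\psi$ decay sufficiently for integration by parts. Then there is a universal constant $C$ (depending only on $c_\eta$) such that $\sum_{i,j=1}^3 \int_{\mathbb{R}^3} \eta^2 |\partial_{ij}\psi|^2 \xi^2\,dx \leq C \Big( \int_{\mathbb{R}^3} \eta |\nabla\psi|^2 \xi^2\,dx + \int_{\mathbb{R}^3} \eta |\Delta\psi|^2 \xi^2\,dx \Big)$. -/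
open MeasureTheory Real Filter Topology RealInnerProductSpace

noncomputable section

/-- Smooth cutoff profile: `1` on `(-∞,1]`, `0` on `[2,∞)`. -/
def thAux (t : ℝ) : ℝ := Real.smoothTransition (2 - t)

lemma thAux_contDiff : ContDiff ℝ (⊤ : ℕ∞) thAux :=
  Real.smoothTransition.contDiff.comp (contDiff_const.sub contDiff_id)

lemma thAux_contDiff_one : ContDiff ℝ 1 thAux :=
  thAux_contDiff.of_le (by exact_mod_cast le_top)

lemma thAux_nonneg (t : ℝ) : 0 ≤ thAux t := Real.smoothTransition.nonneg _
lemma thAux_le_one (t : ℝ) : thAux t ≤ 1 := Real.smoothTransition.le_one _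
lemma thAux_eq_one {t : ℝ} (h : t ≤ 1) : thAux t = 1 :=
  Real.smoothTransition.one_of_one_le (by linarith)
lemma thAux_eq_zero {t : ℝ} (h : 2 ≤ t) : thAux t = 0 :=
  Real.smoothTransition.zero_of_nonpos (by linarith)

lemma thAux_deriv_zero {t : ℝ} (h : t < 1 ∨ 2 < t) : deriv thAux t = 0 := by
  rcases h with h | h
  · have he : thAux =ᶠ[nhds t] fun _ => (1:ℝ) := by
      filter_upwards [Iio_mem_nhds h] with s hs
      exact thAux_eq_one (le_of_lt hs)
    rw [he.deriv_eq]; simp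
  · have he : thAux =ᶠ[nhds t] fun _ => (0:ℝ) := by
      filter_upwards [Ioi_mem_nhds h] with s hs
      exact thAux_eq_zero (le_of_lt hs)
    rw [he.deriv_eq]; simp

lemma thAux_deriv_bound : ∃ κ : ℝ, 0 ≤ κ ∧ ∀ t, |deriv thAux t| ≤ κ := by
  have hc : Continuous (deriv thAux) := thAux_contDiff_one.continuous_deriv le_rfl
  have hcs : HasCompactSupport (deriv thAux) := by
    apply HasCompactSupport.intro (isCompact_Icc (a := (1:ℝ)) (b := 2))
    intro t ht
    simp only [Set.mem_Icc, not_and_or, not_le] at ht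
    exact thAux_deriv_zero ht
  obtain ⟨t₀, ht₀⟩ := (hc.abs).exists_forall_ge_of_hasCompactSupport
    (hcs.comp_left (g := abs) abs_zero)
  exact ⟨|deriv thAux t₀|, abs_nonneg _, ht₀⟩

abbrev E3 := EuclideanSpace ℝ (Fin 3)

/-- Smoothed distance function. -/
def sm (y : E3) (x : E3) : ℝ := Real.sqrt (‖x - y‖ ^ 2 + 1)

lemma sm_pos_arg (y x : E3) : (0:ℝ) < ‖x - y‖ ^ 2 + 1 := by positivity

lemma sm_sq (y x : E3) : sm y x ^ 2 = ‖x - y‖ ^ 2 + 1 :=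
  Real.sq_sqrt (sm_pos_arg y x).le

lemma sm_nonneg (y x : E3) : 0 ≤ sm y x := Real.sqrt_nonneg _

lemma sm_ge_one (y x : E3) : 1 ≤ sm y x := by
  nlinarith [sm_sq y x, sm_nonneg y x, sq_nonneg ‖x - y‖]

lemma dist_le_sm (y x : E3) : dist x y ≤ sm y x := by
  rw [dist_eq_norm]
  nlinarith [sm_sq y x, sm_nonneg y x, norm_nonneg (x - y)]

lemma sm_le_dist_add_one (y x : E3) : sm y x ≤ dist x y + 1 := by
  rw [dist_eq_norm]
  nlinarith [sm_sq y x, sm_nonneg y x, norm_nonneg (x - y)]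

lemma sm_contDiff (y : E3) : ContDiff ℝ 1 (sm y) := by
  rw [contDiff_iff_contDiffAt]
  intro x
  have h1 : ContDiff ℝ 1 (fun x : E3 => ‖x - y‖ ^ 2 + 1) :=
    (ContDiff.norm_sq ℝ (contDiff_id.sub contDiff_const)).add contDiff_const
  exact (Real.contDiffAt_sqrt (sm_pos_arg y x).ne').comp x h1.contDiffAt

lemma norm_sq_fderiv_apply (y x v : E3) :
    fderiv ℝ (fun x : E3 => ‖x - y‖ ^ 2 + 1) x v = 2 * ⟪x - y, v⟫ := by
  have hd : DifferentiableAt ℝ (fun x : E3 => x - y) x :=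
    differentiableAt_id.sub_const y
  have he : (fun x : E3 => ‖x - y‖ ^ 2 + 1) = fun x : E3 => ⟪x - y, x - y⟫ + 1 := by
    funext z; rw [real_inner_self_eq_norm_sq]
  rw [he, fderiv_add_const]
  rw [fderiv_inner_apply (𝕜 := ℝ) hd hd v]
  have hfd : fderiv ℝ (fun x : E3 => x - y) x v = v := by
    rw [fderiv_sub_const]; simp
  rw [hfd, real_inner_comm v (x - y)]
  ring

lemma sm_hasFDerivAt (y x : E3) :
    HasFDerivAt (sm y) ((2 * Real.sqrt (‖x - y‖ ^ 2 + 1))⁻¹ •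
      (fderiv ℝ (fun x : E3 => ‖x - y‖ ^ 2 + 1) x)) x := by
  have h1 : ContDiff ℝ 1 (fun x : E3 => ‖x - y‖ ^ 2 + 1) :=
    (ContDiff.norm_sq ℝ (contDiff_id.sub contDiff_const)).add contDiff_const
  have h2 : HasFDerivAt (fun x : E3 => ‖x - y‖ ^ 2 + 1)
      (fderiv ℝ (fun x : E3 => ‖x - y‖ ^ 2 + 1) x) x :=
    (h1.differentiable one_ne_zero x).hasFDerivAt
  have h3 := (Real.hasDerivAt_sqrt (sm_pos_arg y x).ne').comp_hasFDerivAt x h2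
  rw [one_div] at h3
  exact h3

lemma sm_fderiv_bound (y x v : E3) : |fderiv ℝ (sm y) x v| ≤ ‖v‖ := by
  rw [(sm_hasFDerivAt y x).fderiv]
  simp only [ContinuousLinearMap.coe_smul', Pi.smul_apply, smul_eq_mul]
  rw [norm_sq_fderiv_apply]
  have hs : (0:ℝ) < Real.sqrt (‖x - y‖ ^ 2 + 1) := Real.sqrt_pos.2 (sm_pos_arg y x)
  have hin : |⟪x - y, v⟫| ≤ ‖x - y‖ * ‖v‖ := abs_real_inner_le_norm _ _
  have hxy : ‖x - y‖ ≤ Real.sqrt (‖x - y‖ ^ 2 + 1) := by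
    have := dist_le_sm y x; rw [dist_eq_norm] at this; exact this
  rw [abs_mul, abs_mul, abs_of_pos (by positivity : (0:ℝ) < (2 * Real.sqrt (‖x - y‖ ^ 2 + 1))⁻¹),
    abs_of_nonneg (by norm_num : (0:ℝ) ≤ 2)]
  rw [inv_mul_le_iff₀ (by positivity)]
  calc 2 * |⟪x - y, v⟫| ≤ 2 * (Real.sqrt (‖x - y‖ ^ 2 + 1) * ‖v‖) := by
        nlinarith [mul_le_mul_of_nonneg_right hxy (norm_nonneg v)]
    _ = 2 * Real.sqrt (‖x - y‖ ^ 2 + 1) * ‖v‖ := by ring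


section Apply
variable {E F G H : Type*} [NormedAddCommGroup E] [NormedSpace ℝ E]
  [NormedAddCommGroup F] [NormedSpace ℝ F] [NormedAddCommGroup G] [NormedSpace ℝ G]
  [NormedAddCommGroup H] [NormedSpace ℝ H]

lemma fderiv_apply1 {A : E → F →L[ℝ] G} {x : E} (hA : DifferentiableAt ℝ A x) (c : F) (a : E) :
    fderiv ℝ (fun z => A z c) x a = fderiv ℝ A x a c := by
  have h : HasFDerivAt (fun z => A z c)
      ((ContinuousLinearMap.apply ℝ G c).comp (fderiv ℝ A x)) x :=
    (ContinuousLinearMap.apply ℝ G c).hasFDerivAt.comp x hA.hasFDerivAt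
  rw [h.fderiv]; rfl

lemma fderiv_apply1_diff {A : E → F →L[ℝ] G} {x : E} (hA : DifferentiableAt ℝ A x) (c : F) :
    DifferentiableAt ℝ (fun z => A z c) x :=
  (ContinuousLinearMap.apply ℝ G c).differentiable.differentiableAt.comp x hA

lemma fderiv_apply2 {A : E → F →L[ℝ] G →L[ℝ] H} {x : E} (hA : DifferentiableAt ℝ A x)
    (c : F) (d : G) (a : E) :
    fderiv ℝ (fun z => A z c d) x a = fderiv ℝ A x a c d := by
  have h1 : DifferentiableAt ℝ (fun z => A z c) x := fderiv_apply1_diff hA c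
  rw [fderiv_apply1 (A := fun z => A z c) h1 d a, fderiv_apply1 hA c a]

end Apply

section Symm
variable {E : Type*} [NormedAddCommGroup E] [NormedSpace ℝ E]

lemma third_symm {ψ : E → ℝ} (hψ : ContDiff ℝ 3 ψ) (x a b : E) :
    fderiv ℝ (fun z => fderiv ℝ (fun w => fderiv ℝ ψ w b) z a) x a
      = fderiv ℝ (fun z => fderiv ℝ (fun w => fderiv ℝ ψ w a) z a) x b := by
  have hψd : Differentiable ℝ ψ := hψ.differentiable (by norm_num)
  have hΦ : ContDiff ℝ 2 (fderiv ℝ ψ) := hψ.fderiv_right (by norm_num)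
  have hΦd : Differentiable ℝ (fderiv ℝ ψ) := hΦ.differentiable (by norm_num)
  have hΦ' : ContDiff ℝ 1 (fderiv ℝ (fderiv ℝ ψ)) := hΦ.fderiv_right (by norm_num)
  have hΦ'd : Differentiable ℝ (fderiv ℝ (fderiv ℝ ψ)) := hΦ'.differentiable one_ne_zero
  have e1 : ∀ c : E, (fun z => fderiv ℝ (fun w => fderiv ℝ ψ w c) z a)
      = fun z => fderiv ℝ (fderiv ℝ ψ) z a c := by
    intro c; funext z; exact fderiv_apply1 (hΦd z) c a
  rw [e1 b, e1 a]
  rw [fderiv_apply2 (hΦ'd x) a b a, fderiv_apply2 (hΦ'd x) a a b]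
  have hsecΦ := second_derivative_symmetric (f := fderiv ℝ ψ)
    (f' := fderiv ℝ (fderiv ℝ ψ)) (f'' := fderiv ℝ (fderiv ℝ (fderiv ℝ ψ)) x)
    (fun y => (hΦd y).hasFDerivAt) ((hΦ'd x).hasFDerivAt)
  have hsecψ : ∀ z v w, fderiv ℝ (fderiv ℝ ψ) z v w = fderiv ℝ (fderiv ℝ ψ) z w v := fun z v w =>
    second_derivative_symmetric (fun y => (hψd y).hasFDerivAt) ((hΦd z).hasFDerivAt) v w
  have h1 : (fun z => fderiv ℝ (fderiv ℝ ψ) z a b) = (fun z => fderiv ℝ (fderiv ℝ ψ) z b a) :=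
    funext fun z => hsecψ z a b
  calc fderiv ℝ (fderiv ℝ (fderiv ℝ ψ)) x a a b
      = fderiv ℝ (fun z => fderiv ℝ (fderiv ℝ ψ) z a b) x a := (fderiv_apply2 (hΦ'd x) a b a).symm
    _ = fderiv ℝ (fun z => fderiv ℝ (fderiv ℝ ψ) z b a) x a := by rw [h1]
    _ = fderiv ℝ (fderiv ℝ (fderiv ℝ ψ)) x a b a := fderiv_apply2 (hΦ'd x) b a a
    _ = fderiv ℝ (fderiv ℝ (fderiv ℝ ψ)) x b a a := by rw [hsecΦ a b]
end Symm

section Weight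
variable (γ : ℝ) (y : E3) (n : ℕ)

def xh (x : E3) : ℝ := Real.exp (-γ * sm y x)
def chi (x : E3) : ℝ := thAux (sm y x / (n + 1))
def rho (x : E3) : ℝ := chi y n x * xh γ y x

lemma xh_pos (x : E3) : 0 < xh γ y x := Real.exp_pos _
lemma chi_nonneg (x : E3) : 0 ≤ chi y n x := thAux_nonneg _
lemma chi_le_one (x : E3) : chi y n x ≤ 1 := thAux_le_one _
lemma rho_nonneg (x : E3) : 0 ≤ rho γ y n x :=
  mul_nonneg (chi_nonneg y n x) (xh_pos γ y x).le
lemma rho_le_xh (x : E3) : rho γ y n x ≤ xh γ y x := by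
  have := mul_le_of_le_one_left (xh_pos γ y x).le (chi_le_one y n x)
  simpa [rho] using this

lemma xh_le_xi (hγ0 : 0 ≤ γ) (x : E3) : xh γ y x ≤ Real.exp (-γ * dist x y) := by
  apply Real.exp_le_exp.2
  have := dist_le_sm y x
  nlinarith

lemma xi_le_e_mul_xh (hγ0 : 0 ≤ γ) (hγ1 : γ ≤ 1) (x : E3) :
    Real.exp (-γ * dist x y) ≤ Real.exp 1 * xh γ y x := by
  rw [xh, ← Real.exp_add]
  apply Real.exp_le_exp.2
  have h1 := sm_le_dist_add_one y x
  have h2 := dist_le_sm y x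
  nlinarith

lemma chi_eq_one {x : E3} (h : sm y x ≤ n + 1) : chi y n x = 1 :=
  thAux_eq_one (by rw [div_le_one (by positivity)]; exact h)

lemma chi_eq_zero {x : E3} (h : 2 * (n + 1) ≤ sm y x) : chi y n x = 0 :=
  thAux_eq_zero (by rw [le_div_iff₀ (by positivity : (0:ℝ) < n + 1)]; linarith)

lemma sm_diff : Differentiable ℝ (sm y) := (sm_contDiff y).differentiable one_ne_zero

lemma xh_contDiff : ContDiff ℝ 1 (xh γ y) :=
  Real.contDiff_exp.comp (contDiff_const.mul (sm_contDiff y))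

lemma chi_contDiff : ContDiff ℝ 1 (chi y n) :=
  thAux_contDiff_one.comp ((sm_contDiff y).div_const _)

lemma xh_hasFDerivAt (x : E3) : HasFDerivAt (xh γ y)
    (Real.exp (-γ * sm y x) • ((-γ) • fderiv ℝ (sm y) x)) x := by
  have h1 : HasFDerivAt (fun x => -γ * sm y x) ((-γ) • fderiv ℝ (sm y) x) x :=
    (sm_diff y x).hasFDerivAt.const_mul (-γ)
  exact (Real.hasDerivAt_exp _).comp_hasFDerivAt x h1

lemma xh_fderiv_bound (hγ0 : 0 ≤ γ) (x v : E3) :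
    |fderiv ℝ (xh γ y) x v| ≤ γ * xh γ y x * ‖v‖ := by
  rw [(xh_hasFDerivAt γ y x).fderiv]
  simp only [ContinuousLinearMap.coe_smul', Pi.smul_apply, smul_eq_mul]
  rw [abs_mul, abs_mul]
  rw [abs_of_pos (Real.exp_pos _), abs_neg, abs_of_nonneg hγ0]
  have h := sm_fderiv_bound y x v
  have : xh γ y x = Real.exp (-γ * sm y x) := rfl
  rw [this]
  have hx := Real.exp_pos (-γ * sm y x)
  nlinarith [abs_nonneg (fderiv ℝ (sm y) x v),
    mul_le_mul_of_nonneg_left h (mul_nonneg hγ0 hx.le)]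

lemma chi_hasFDerivAt (x : E3) : HasFDerivAt (chi y n)
    (deriv thAux (sm y x / (n + 1)) • ((1 / ((n:ℝ) + 1)) • fderiv ℝ (sm y) x)) x := by
  have hfe : (fun x : E3 => sm y x / (n + 1)) = (fun x => (1 / ((n:ℝ) + 1)) * sm y x) := by
    funext z; ring
  have h1 : HasFDerivAt (fun x : E3 => sm y x / (n + 1))
      ((1 / ((n:ℝ) + 1)) • fderiv ℝ (sm y) x) x := by
    rw [hfe]
    exact ((sm_diff y x).hasFDerivAt).const_mul _
  have h2 : HasDerivAt thAux (deriv thAux (sm y x / (n + 1))) (sm y x / (n + 1)) :=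
    ((thAux_contDiff_one.differentiable one_ne_zero) _).hasDerivAt
  exact h2.comp_hasFDerivAt x h1

lemma chi_fderiv_bound {κ : ℝ} (hκ : ∀ t, |deriv thAux t| ≤ κ) (x v : E3) :
    |fderiv ℝ (chi y n) x v| ≤ κ * ‖v‖ := by
  rw [(chi_hasFDerivAt y n x).fderiv]
  simp only [ContinuousLinearMap.coe_smul', Pi.smul_apply, smul_eq_mul]
  rw [abs_mul, abs_mul]
  have h1 := hκ (sm y x / (n + 1))
  have h2 := sm_fderiv_bound y x v
  have h3 : |1 / ((n:ℝ) + 1)| ≤ 1 := by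
    rw [abs_of_pos (by positivity)]
    rw [div_le_one (by positivity)]
    simp
  have h0 : (0:ℝ) ≤ κ := le_trans (abs_nonneg _) h1
  nlinarith [abs_nonneg (deriv thAux (sm y x / (n + 1))), abs_nonneg (fderiv ℝ (sm y) x v),
    abs_nonneg ((1:ℝ) / ((n:ℝ) + 1)), norm_nonneg v,
    mul_le_mul h1 h3 (abs_nonneg _) h0]

lemma rho_diff : Differentiable ℝ (rho γ y n) :=
  ((chi_contDiff y n).differentiable one_ne_zero).mul ((xh_contDiff γ y).differentiable one_ne_zero)

lemma rho_contDiff : ContDiff ℝ 1 (rho γ y n) := (chi_contDiff y n).mul (xh_contDiff γ y)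

lemma rho_fderiv_bound {κ : ℝ} (hγ0 : 0 ≤ γ) (hγ1 : γ ≤ 1) (hκ : ∀ t, |deriv thAux t| ≤ κ)
    (x v : E3) : |fderiv ℝ (rho γ y n) x v| ≤ (κ + 1) * xh γ y x * ‖v‖ := by
  have hd : fderiv ℝ (rho γ y n) x v
      = chi y n x * fderiv ℝ (xh γ y) x v + fderiv ℝ (chi y n) x v * xh γ y x := by
    have := fderiv_fun_mul (x := x) ((chi_contDiff y n).differentiable one_ne_zero x)
      ((xh_contDiff γ y).differentiable one_ne_zero x)
    have h2 : fderiv ℝ (rho γ y n) x = chi y n x • fderiv ℝ (xh γ y) x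
        + xh γ y x • fderiv ℝ (chi y n) x := this
    rw [show rho γ y n = fun x => chi y n x * xh γ y x from rfl] at *
    rw [h2]
    simp only [ContinuousLinearMap.add_apply, ContinuousLinearMap.coe_smul', Pi.smul_apply,
      smul_eq_mul]
    ring
  rw [hd]
  have b1 := xh_fderiv_bound γ y hγ0 x v
  have b2 := chi_fderiv_bound y n hκ x v
  have hκ0 : (0:ℝ) ≤ κ := le_trans (abs_nonneg _) (hκ 0)
  have hc0 := chi_nonneg y n x
  have hc1 := chi_le_one y n x
  have hx0 := (xh_pos γ y x).le
  have hv := norm_nonneg v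
  have e1 : |chi y n x * fderiv ℝ (xh γ y) x v + fderiv ℝ (chi y n) x v * xh γ y x|
      ≤ chi y n x * |fderiv ℝ (xh γ y) x v| + |fderiv ℝ (chi y n) x v| * xh γ y x := by
    refine le_trans (abs_add_le _ _) ?_
    rw [abs_mul, abs_mul, abs_of_nonneg hc0, abs_of_nonneg hx0]
  have t1 : chi y n x * |fderiv ℝ (xh γ y) x v| ≤ γ * xh γ y x * ‖v‖ :=
    le_trans (mul_le_of_le_one_left (abs_nonneg _) hc1) b1
  have t2 : |fderiv ℝ (chi y n) x v| * xh γ y x ≤ κ * ‖v‖ * xh γ y x :=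
    mul_le_mul_of_nonneg_right b2 hx0
  nlinarith [e1, t1, t2, mul_nonneg hx0 hv]
end Weight

section Wgt
variable (η : E3 → ℝ) (γ : ℝ) (y : E3) (n : ℕ)

def pfun (x : E3) : ℝ := η x * rho γ y n x
def wgt (x : E3) : ℝ := pfun η γ y n x * pfun η γ y n x

variable {η γ}

lemma pfun_contDiff (hη : ContDiff ℝ 1 η) : ContDiff ℝ 1 (pfun η γ y n) :=
  hη.mul (rho_contDiff γ y n)

lemma wgt_contDiff (hη : ContDiff ℝ 1 η) : ContDiff ℝ 1 (wgt η γ y n) :=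
  (pfun_contDiff y n hη).mul (pfun_contDiff y n hη)

lemma wgt_nonneg (x : E3) : 0 ≤ wgt η γ y n x := mul_self_nonneg _

lemma wgt_zero_far {x : E3} (h : x ∉ Metric.closedBall y (2 * (n + 1))) :
    wgt η γ y n x = 0 := by
  have hd : 2 * ((n:ℝ) + 1) < dist x y := by
    simp only [Metric.mem_closedBall, not_le] at h; exact h
  have hs : 2 * ((n:ℝ) + 1) ≤ sm y x := le_trans hd.le (dist_le_sm y x)
  have : chi y n x = 0 := chi_eq_zero y n hs
  simp [wgt, pfun, rho, this]

lemma wgt_hasCompactSupport : HasCompactSupport (wgt η γ y n) :=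
  HasCompactSupport.intro (isCompact_closedBall y _) (fun x hx => wgt_zero_far y n hx)

lemma wgt_le_eta_xi_sq (hγ0 : 0 ≤ γ) (hη0 : ∀ x, 0 ≤ η x) (hη1 : ∀ x, η x ≤ 1) (x : E3) :
    wgt η γ y n x ≤ η x * (Real.exp (-γ * dist x y)) ^ 2 := by
  have h1 := rho_le_xh γ y n x
  have h2 := xh_le_xi γ y hγ0 x
  have h3 := rho_nonneg γ y n x
  have h4 := (xh_pos γ y x).le
  have h5 := Real.exp_pos (-γ * dist x y)
  have := hη0 x; have := hη1 x
  have hrx : rho γ y n x ≤ Real.exp (-γ * dist x y) := le_trans h1 h2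
  simp only [wgt, pfun]
  have hA : rho γ y n x * rho γ y n x ≤ Real.exp (-γ * dist x y) * Real.exp (-γ * dist x y) :=
    mul_le_mul hrx hrx h3 h5.le
  have h0 := hη0 x
  have hB : η x * η x ≤ η x := mul_le_of_le_one_right h0 (hη1 x)
  calc η x * rho γ y n x * (η x * rho γ y n x)
      = η x * η x * (rho γ y n x * rho γ y n x) := by ring
    _ ≤ η x * η x * (Real.exp (-γ * dist x y) * Real.exp (-γ * dist x y)) :=
        mul_le_mul_of_nonneg_left hA (mul_nonneg h0 h0)
    _ ≤ η x * (Real.exp (-γ * dist x y) * Real.exp (-γ * dist x y)) :=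
        mul_le_mul_of_nonneg_right hB (mul_nonneg h5.le h5.le)
    _ = η x * (Real.exp (-γ * dist x y)) ^ 2 := by ring

lemma wgt_le_eta_sq_xi_sq (hγ0 : 0 ≤ γ) (hη0 : ∀ x, 0 ≤ η x) (x : E3) :
    wgt η γ y n x ≤ (η x) ^ 2 * (Real.exp (-γ * dist x y)) ^ 2 := by
  have h1 := rho_le_xh γ y n x
  have h2 := xh_le_xi γ y hγ0 x
  have h3 := rho_nonneg γ y n x
  have h5 := Real.exp_pos (-γ * dist x y)
  have := hη0 x
  have hrx : rho γ y n x ≤ Real.exp (-γ * dist x y) := le_trans h1 h2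
  simp only [wgt, pfun]
  have hA : rho γ y n x * rho γ y n x ≤ Real.exp (-γ * dist x y) * Real.exp (-γ * dist x y) :=
    mul_le_mul hrx hrx h3 h5.le
  have h0 := hη0 x
  calc η x * rho γ y n x * (η x * rho γ y n x)
      = η x * η x * (rho γ y n x * rho γ y n x) := by ring
    _ ≤ η x * η x * (Real.exp (-γ * dist x y) * Real.exp (-γ * dist x y)) :=
        mul_le_mul_of_nonneg_left hA (mul_nonneg h0 h0)
    _ = (η x) ^ 2 * (Real.exp (-γ * dist x y)) ^ 2 := by ring

lemma wgt_eventually (x : E3) : ∀ n : ℕ, sm y x ≤ n + 1 →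
    wgt η γ y n x = (η x * xh γ y x) ^ 2 := by
  intro n hn
  have : chi y n x = 1 := chi_eq_one y n hn
  simp [wgt, pfun, rho, this, sq]

lemma wgt_tendsto (x : E3) :
    Filter.Tendsto (fun n : ℕ => wgt η γ y n x) atTop (nhds ((η x * xh γ y x) ^ 2)) := by
  apply Filter.Tendsto.congr' _ tendsto_const_nhds
  filter_upwards [Filter.eventually_ge_atTop (Nat.ceil (sm y x))] with n hn
  have hle : sm y x ≤ (n:ℝ) + 1 := by
    have h1 : sm y x ≤ (Nat.ceil (sm y x) : ℝ) := Nat.le_ceil _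
    have h2 : ((Nat.ceil (sm y x) : ℕ) : ℝ) ≤ (n:ℝ) := Nat.cast_le.2 hn
    linarith
  exact (wgt_eventually y x n hle).symm

lemma wgt_fderiv_bound {cη κ : ℝ} (hγ0 : 0 < γ) (hγ1 : γ ≤ 1)
    (hκ : ∀ t, |deriv thAux t| ≤ κ)
    (hη : ContDiff ℝ 1 η) (hη0 : ∀ x, 0 ≤ η x) (hη1 : ∀ x, η x ≤ 1)
    (hηf : ∀ x v, |fderiv ℝ η x v| ≤ Real.sqrt cη * Real.sqrt (η x) * ‖v‖) (x v : E3) :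
    |fderiv ℝ (wgt η γ y n) x v| ≤ (2 * Real.sqrt cη + 2 * κ + 2) *
      (Real.sqrt (η x) * η x) * (rho γ y n x * xh γ y x) * ‖v‖ := by
  have hκ0 : (0:ℝ) ≤ κ := le_trans (abs_nonneg _) (hκ 0)
  have hηd := hη.differentiable one_ne_zero
  have hρd := rho_diff γ y n
  have hPd : Differentiable ℝ (pfun η γ y n) := hηd.mul hρd
  -- expand fderiv of the square
  have hW : fderiv ℝ (wgt η γ y n) x v
      = 2 * pfun η γ y n x * fderiv ℝ (pfun η γ y n) x v := by
    have := fderiv_fun_mul (hPd x) (hPd x)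
    have h2 : fderiv ℝ (wgt η γ y n) x = pfun η γ y n x • fderiv ℝ (pfun η γ y n) x
        + pfun η γ y n x • fderiv ℝ (pfun η γ y n) x := this
    rw [h2]
    simp only [ContinuousLinearMap.add_apply, ContinuousLinearMap.coe_smul', Pi.smul_apply,
      smul_eq_mul]
    ring
  have hP : fderiv ℝ (pfun η γ y n) x v
      = η x * fderiv ℝ (rho γ y n) x v + fderiv ℝ η x v * rho γ y n x := by
    have := fderiv_fun_mul (hηd x) (hρd x)
    have h2 : fderiv ℝ (pfun η γ y n) x = η x • fderiv ℝ (rho γ y n) x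
        + rho γ y n x • fderiv ℝ η x := this
    rw [h2]
    simp only [ContinuousLinearMap.add_apply, ContinuousLinearMap.coe_smul', Pi.smul_apply,
      smul_eq_mul]
    ring
  rw [hW]
  -- bounds
  have b1 := rho_fderiv_bound γ y n hγ0.le hγ1 hκ x v
  have b2 := hηf x v
  have h0 := hη0 x
  have h1 := hη1 x
  have hρ0 := rho_nonneg γ y n x
  have hρx := rho_le_xh γ y n x
  have hx0 := (xh_pos γ y x).le
  have hv := norm_nonneg v
  have hsq : Real.sqrt (η x) * Real.sqrt (η x) = η x := Real.mul_self_sqrt h0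
  have hsη : η x ≤ Real.sqrt (η x) := by
    have hsl : Real.sqrt (η x) ≤ 1 := by
      rw [show (1:ℝ) = Real.sqrt 1 by simp]
      exact Real.sqrt_le_sqrt h1
    nlinarith [Real.sqrt_nonneg (η x)]
  have hsη0 : 0 ≤ Real.sqrt (η x) := Real.sqrt_nonneg _
  have hc0 : (0:ℝ) ≤ Real.sqrt cη := Real.sqrt_nonneg _
  -- |P| = η ρ
  have hPabs : |pfun η γ y n x| = η x * rho γ y n x := by
    rw [show pfun η γ y n x = η x * rho γ y n x from rfl, abs_of_nonneg (mul_nonneg h0 hρ0)]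
  have key : |fderiv ℝ (pfun η γ y n) x v|
      ≤ η x * ((κ + 1) * xh γ y x * ‖v‖) + Real.sqrt cη * Real.sqrt (η x) * ‖v‖ * rho γ y n x := by
    rw [hP]
    refine le_trans (abs_add_le _ _) ?_
    rw [abs_mul, abs_mul, abs_of_nonneg h0, abs_of_nonneg hρ0]
    have := mul_le_mul_of_nonneg_left b1 h0
    have := mul_le_mul_of_nonneg_right b2 hρ0
    linarith
  rw [abs_mul]
  have habs2 : |2 * pfun η γ y n x| = 2 * (η x * rho γ y n x) := by
    rw [abs_mul, abs_of_nonneg (by norm_num : (0:ℝ) ≤ 2), hPabs]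
  rw [habs2]
  -- main multiplication
  have expand : 2 * (η x * rho γ y n x) *
      (η x * ((κ + 1) * xh γ y x * ‖v‖) + Real.sqrt cη * Real.sqrt (η x) * ‖v‖ * rho γ y n x)
      ≤ (2 * Real.sqrt cη + 2 * κ + 2) * (Real.sqrt (η x) * η x) * (rho γ y n x * xh γ y x) * ‖v‖ := by
    have hη2 : η x * η x ≤ Real.sqrt (η x) * η x :=
      mul_le_mul_of_nonneg_right hsη h0
    have hρ2 : rho γ y n x * rho γ y n x ≤ rho γ y n x * xh γ y x :=
      mul_le_mul_of_nonneg_left hρx hρ0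
    nlinarith [mul_nonneg (mul_nonneg h0 hρ0) hv, mul_nonneg hsη0 h0,
      mul_nonneg hρ0 hx0, mul_nonneg (mul_nonneg hsη0 h0) hv,
      mul_le_mul_of_nonneg_left hρ2 (mul_nonneg (mul_nonneg hc0 (mul_nonneg hsη0 h0)) hv),
      mul_le_mul_of_nonneg_left hη2 (mul_nonneg (mul_nonneg (by linarith : (0:ℝ) ≤ 2*(κ+1)) (mul_nonneg hρ0 hx0)) hv)]
  calc 2 * (η x * rho γ y n x) * |fderiv ℝ (pfun η γ y n) x v|
      ≤ 2 * (η x * rho γ y n x) *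
        (η x * ((κ + 1) * xh γ y x * ‖v‖) + Real.sqrt cη * Real.sqrt (η x) * ‖v‖ * rho γ y n x) :=
        mul_le_mul_of_nonneg_left key (by positivity)
    _ ≤ _ := expand

end Wgt

section Derivs
variable (ψ : E3 → ℝ)

def u1 (j : Fin 3) : E3 → ℝ := fun z => fderiv ℝ ψ z (EuclideanSpace.single j 1)
def u2 (i j : Fin 3) : E3 → ℝ := fun x => fderiv ℝ (u1 ψ j) x (EuclideanSpace.single i 1)

variable {ψ}

lemma u1_contDiff (hψ : ContDiff ℝ 3 ψ) (j : Fin 3) : ContDiff ℝ 2 (u1 ψ j) :=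
  (hψ.fderiv_right (by norm_num)).clm_apply contDiff_const

lemma u2_contDiff (hψ : ContDiff ℝ 3 ψ) (i j : Fin 3) : ContDiff ℝ 1 (u2 ψ i j) :=
  ((u1_contDiff hψ j).fderiv_right (by norm_num)).clm_apply contDiff_const

lemma u2_third (hψ : ContDiff ℝ 3 ψ) (x : E3) (i j : Fin 3) :
    fderiv ℝ (u2 ψ i j) x (EuclideanSpace.single i 1)
      = fderiv ℝ (u2 ψ i i) x (EuclideanSpace.single j 1) := by
  exact third_symm hψ x (EuclideanSpace.single i 1) (EuclideanSpace.single j 1)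

end Derivs

section IBP
variable {ψ η : E3 → ℝ} {γ : ℝ} (y : E3) (n : ℕ)

-- integrability of continuous compactly supported
lemma integ_cc {f : E3 → ℝ} (hf : Continuous f) (hcs : HasCompactSupport f) :
    Integrable f volume := hf.integrable_of_hasCompactSupport hcs

lemma hcs_apply {f : E3 → ℝ} (hcs : HasCompactSupport f) (g : E3 → ℝ) :
    HasCompactSupport (fun x => f x * g x) := hcs.mul_right

lemma fderiv_apply_cont {f : E3 → ℝ} (hf : ContDiff ℝ 1 f) (v : E3) :
    Continuous (fun x => fderiv ℝ f x v) :=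
  (hf.continuous_fderiv one_ne_zero).clm_apply continuous_const

lemma fderiv_apply_hcs {f : E3 → ℝ} (hcs : HasCompactSupport f) (v : E3) :
    HasCompactSupport (fun x => fderiv ℝ f x v) := by
  have h1 : HasCompactSupport (fderiv ℝ f) := hcs.fderiv ℝ
  have h2 : HasCompactSupport ((fun L : E3 →L[ℝ] ℝ => L v) ∘ (fderiv ℝ f)) :=
    h1.comp_left (by simp)
  exact h2

/-- Integration by parts step: `∫ F * ∂ᵥg = - ∫ ∂ᵥF * g` for `F` C¹ compactly supported,
`g` C¹ with continuous derivative. -/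
lemma ibp_step {F g : E3 → ℝ} (hF : ContDiff ℝ 1 F) (hFc : HasCompactSupport F)
    (hg : ContDiff ℝ 1 g) (v : E3) :
    ∫ x, F x * fderiv ℝ g x v = - ∫ x, fderiv ℝ F x v * g x := by
  apply integral_mul_fderiv_eq_neg_fderiv_mul_of_integrable
  · exact integ_cc (((fderiv_apply_cont hF v)).mul hg.continuous)
      ((fderiv_apply_hcs hFc v).mul_right)
  · exact integ_cc (hF.continuous.mul (fderiv_apply_cont hg v)) (hFc.mul_right)
  · exact integ_cc (hF.continuous.mul hg.continuous) (hFc.mul_right)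
  · exact fun x _ => hF.differentiable one_ne_zero x
  · exact fun x _ => hg.differentiable one_ne_zero x

/-- The key integral identity obtained by two integrations by parts. -/
lemma ibp_identity (hψ : ContDiff ℝ 3 ψ) (hη : ContDiff ℝ 1 η) (i j : Fin 3) :
    ∫ x, wgt η γ y n x * u2 ψ i j x * u2 ψ i j x
      = (∫ x, wgt η γ y n x * u2 ψ j j x * u2 ψ i i x)
        + (∫ x, fderiv ℝ (wgt η γ y n) x (EuclideanSpace.single j 1) * u1 ψ j x * u2 ψ i i x)
        - ∫ x, fderiv ℝ (wgt η γ y n) x (EuclideanSpace.single i 1) * u2 ψ i j x * u1 ψ j x := by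
  set W := wgt η γ y n with hW
  have hWc : ContDiff ℝ 1 W := wgt_contDiff y n hη
  have hWcs : HasCompactSupport W := wgt_hasCompactSupport y n
  have hWd : Differentiable ℝ W := hWc.differentiable one_ne_zero
  have hu1d : ∀ k, Differentiable ℝ (u1 ψ k) := fun k => (u1_contDiff hψ k).differentiable two_ne_zero
  have hu2d : ∀ a b, Differentiable ℝ (u2 ψ a b) := fun a b => (u2_contDiff hψ a b).differentiable one_ne_zero
  have hu2c1 : ∀ a b, ContDiff ℝ 1 (u2 ψ a b) := u2_contDiff hψ
  have hu1c1 : ∀ k, ContDiff ℝ 1 (u1 ψ k) := fun k => (u1_contDiff hψ k).of_le one_le_two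
  -- First IBP : ∫ (W u2ij) ∂ᵢ(u1 j) = - ∫ ∂ᵢ(W u2ij) u1j
  have hf1 : ContDiff ℝ 1 (fun x => W x * u2 ψ i j x) := hWc.mul (hu2c1 i j)
  have hf1cs : HasCompactSupport (fun x => W x * u2 ψ i j x) := hWcs.mul_right
  have ibp1 := ibp_step hf1 hf1cs (hu1c1 j) (EuclideanSpace.single i 1)
  -- Second IBP : ∫ (W u1j) ∂ⱼ(u2 i i) = - ∫ ∂ⱼ(W u1j) u2ii
  have hf2 : ContDiff ℝ 1 (fun x => W x * u1 ψ j x) := hWc.mul (hu1c1 j)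
  have hf2cs : HasCompactSupport (fun x => W x * u1 ψ j x) := hWcs.mul_right
  have ibp2 := ibp_step hf2 hf2cs (hu2c1 i i) (EuclideanSpace.single j 1)
  -- expand the derivative of products
  have exp1 : ∀ x, fderiv ℝ (fun x => W x * u2 ψ i j x) x (EuclideanSpace.single i 1)
      = W x * fderiv ℝ (u2 ψ i j) x (EuclideanSpace.single i 1)
        + fderiv ℝ W x (EuclideanSpace.single i 1) * u2 ψ i j x := by
    intro x
    rw [fderiv_fun_mul (hWd x) (hu2d i j x)]
    simp only [ContinuousLinearMap.add_apply, ContinuousLinearMap.coe_smul', Pi.smul_apply,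
      smul_eq_mul]
    ring
  have exp2 : ∀ x, fderiv ℝ (fun x => W x * u1 ψ j x) x (EuclideanSpace.single j 1)
      = W x * fderiv ℝ (u1 ψ j) x (EuclideanSpace.single j 1)
        + fderiv ℝ W x (EuclideanSpace.single j 1) * u1 ψ j x := by
    intro x
    rw [fderiv_fun_mul (hWd x) (hu1d j x)]
    simp only [ContinuousLinearMap.add_apply, ContinuousLinearMap.coe_smul', Pi.smul_apply,
      smul_eq_mul]
    ring
  -- integrability of all pieces
  have cW := hWc.continuous
  have Ia : Integrable (fun x => W x * fderiv ℝ (u2 ψ i j) x (EuclideanSpace.single i 1)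
      * u1 ψ j x) volume :=
    integ_cc ((cW.mul (fderiv_apply_cont (hu2c1 i j) _)).mul (hu1c1 j).continuous)
      (hWcs.mul_right.mul_right)
  have Ib : Integrable (fun x => fderiv ℝ W x (EuclideanSpace.single i 1) * u2 ψ i j x
      * u1 ψ j x) volume :=
    integ_cc (((fderiv_apply_cont hWc _).mul (hu2c1 i j).continuous).mul (hu1c1 j).continuous)
      ((fderiv_apply_hcs hWcs _).mul_right.mul_right)
  have Ic : Integrable (fun x => W x * u2 ψ j j x * u2 ψ i i x) volume :=
    integ_cc ((cW.mul (hu2c1 j j).continuous).mul (hu2c1 i i).continuous)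
      (hWcs.mul_right.mul_right)
  have Id : Integrable (fun x => fderiv ℝ W x (EuclideanSpace.single j 1) * u1 ψ j x
      * u2 ψ i i x) volume :=
    integ_cc (((fderiv_apply_cont hWc _).mul (hu1c1 j).continuous).mul (hu2c1 i i).continuous)
      ((fderiv_apply_hcs hWcs _).mul_right.mul_right)
  -- step 1
  have step1 : ∫ x, W x * u2 ψ i j x * u2 ψ i j x
      = -∫ x, (W x * fderiv ℝ (u2 ψ i j) x (EuclideanSpace.single i 1) * u1 ψ j x
          + fderiv ℝ W x (EuclideanSpace.single i 1) * u2 ψ i j x * u1 ψ j x) := by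
    calc ∫ x, W x * u2 ψ i j x * u2 ψ i j x
        = ∫ x, (W x * u2 ψ i j x) * fderiv ℝ (u1 ψ j) x (EuclideanSpace.single i 1) := by
          congr 1
      _ = -∫ x, fderiv ℝ (fun x => W x * u2 ψ i j x) x (EuclideanSpace.single i 1)
            * u1 ψ j x := ibp1
      _ = -∫ x, (W x * fderiv ℝ (u2 ψ i j) x (EuclideanSpace.single i 1) * u1 ψ j x
            + fderiv ℝ W x (EuclideanSpace.single i 1) * u2 ψ i j x * u1 ψ j x) := by
          congr 1
          congr 1
          funext x
          rw [exp1 x]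
          ring
  have split1 := integral_add Ia Ib
  -- step 2
  have step2 : ∫ x, W x * fderiv ℝ (u2 ψ i j) x (EuclideanSpace.single i 1) * u1 ψ j x
      = -∫ x, (W x * u2 ψ j j x * u2 ψ i i x
          + fderiv ℝ W x (EuclideanSpace.single j 1) * u1 ψ j x * u2 ψ i i x) := by
    calc ∫ x, W x * fderiv ℝ (u2 ψ i j) x (EuclideanSpace.single i 1) * u1 ψ j x
        = ∫ x, (W x * u1 ψ j x) * fderiv ℝ (u2 ψ i i) x (EuclideanSpace.single j 1) := by
          congr 1
          funext x
          rw [u2_third hψ x i j]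
          ring
      _ = -∫ x, fderiv ℝ (fun x => W x * u1 ψ j x) x (EuclideanSpace.single j 1)
            * u2 ψ i i x := ibp2
      _ = -∫ x, (W x * u2 ψ j j x * u2 ψ i i x
            + fderiv ℝ W x (EuclideanSpace.single j 1) * u1 ψ j x * u2 ψ i i x) := by
          congr 1
          congr 1
          funext x
          rw [exp2 x]
          show (W x * u2 ψ j j x + _) * _ = _
          ring
  have split2 := integral_add Ic Id
  linarith [step1, split1, step2, split2]

end IBP

lemma amgm (K p q : ℝ) : K * (p * q) ≤ 2 * K ^ 2 * p ^ 2 + (1/8) * q ^ 2 := by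
  nlinarith [sq_nonneg (2 * K * p - q / 2)]

lemma norm_gradient_eq (f : E3 → ℝ) (x : E3) : ‖gradient f x‖ = ‖fderiv ℝ f x‖ :=
  LinearIsometryEquiv.norm_map (InnerProductSpace.toDual ℝ E3).symm (fderiv ℝ f x)

lemma fderiv_eq_inner_gradient (f : E3 → ℝ) (x v : E3) :
    fderiv ℝ f x v = ⟪gradient f x, v⟫ :=
  (InnerProductSpace.toDual_symm_apply).symm

lemma gradsq (f : E3 → ℝ) (x : E3) :
    ‖gradient f x‖ ^ 2 = ∑ j : Fin 3, (fderiv ℝ f x (EuclideanSpace.single j 1)) ^ 2 := by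
  have h1 : ∀ j : Fin 3, fderiv ℝ f x (EuclideanSpace.single j 1) = gradient f x j := by
    intro j
    rw [fderiv_eq_inner_gradient, EuclideanSpace.inner_single_right]
    simp
  rw [EuclideanSpace.norm_eq, Real.sq_sqrt (by positivity)]
  refine Finset.sum_congr rfl fun j _ => ?_
  rw [h1 j, Real.norm_eq_abs, sq_abs]

end

open MeasureTheory

set_option maxHeartbeats 2000000 in
/-- Weighted Hessian estimate: with cutoff `η` (with `|∇η|² ≤ c_η η`) and exponential
weight `ξ = e^{-γ|·-y|}`, `0 < γ ≤ 1`, the weighted `L²` norm of the Hessian of `ψ` is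
controlled by those of its gradient and Laplacian, with a constant depending only on
`c_η`. -/
theorem stmt_14 (cη : ℝ) (hcη : 0 < cη) :
    ∃ C : ℝ, 0 < C ∧
      ∀ (ψ η : EuclideanSpace ℝ (Fin 3) → ℝ) (γ : ℝ) (y : EuclideanSpace ℝ (Fin 3)),
        0 < γ → γ ≤ 1 →
        ContDiff ℝ 3 ψ →
        ContDiff ℝ 1 η → (∀ x, η x ∈ Set.Icc (0:ℝ) 1) →
        (∀ x, ‖gradient η x‖ ^ 2 ≤ cη * η x) →
        Integrable (fun x => η x * ‖gradient ψ x‖ ^ 2 * (Real.exp (-γ * dist x y)) ^ 2) →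
        (∀ i j : Fin 3, Integrable (fun x => (η x) ^ 2 *
          (fderiv ℝ (fun z => fderiv ℝ ψ z (EuclideanSpace.single j 1)) x
            (EuclideanSpace.single i 1)) ^ 2 * (Real.exp (-γ * dist x y)) ^ 2)) →
        Integrable (fun x => η x *
          (∑ i : Fin 3, fderiv ℝ (fun z => fderiv ℝ ψ z (EuclideanSpace.single i 1)) x
            (EuclideanSpace.single i 1)) ^ 2 * (Real.exp (-γ * dist x y)) ^ 2) →
        (∑ i : Fin 3, ∑ j : Fin 3, ∫ x, (η x) ^ 2 *
            (fderiv ℝ (fun z => fderiv ℝ ψ z (EuclideanSpace.single j 1)) x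
              (EuclideanSpace.single i 1)) ^ 2 * (Real.exp (-γ * dist x y)) ^ 2) ≤
          C * ((∫ x, η x * ‖gradient ψ x‖ ^ 2 * (Real.exp (-γ * dist x y)) ^ 2) +
            ∫ x, η x * (∑ i : Fin 3,
              fderiv ℝ (fun z => fderiv ℝ ψ z (EuclideanSpace.single i 1)) x
                (EuclideanSpace.single i 1)) ^ 2 * (Real.exp (-γ * dist x y)) ^ 2) := by
  obtain ⟨κ, hκ0, hκ⟩ := thAux_deriv_bound
  set K : ℝ := 2 * Real.sqrt cη + 2 * κ + 2 with hKdef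
  have hKpos : 0 < K := by positivity
  refine ⟨Real.exp 1 ^ 2 * (24 * K ^ 2 + 2), by positivity, ?_⟩
  intro ψ η γ y hγ0 hγ1 hψ hη hη01 hηg hIG hIH hIL
  have hη0 : ∀ x, 0 ≤ η x := fun x => (hη01 x).1
  have hη1 : ∀ x, η x ≤ 1 := fun x => (hη01 x).2
  -- convert the gradient hypothesis into an fderiv bound
  have hηf : ∀ x v, |fderiv ℝ η x v| ≤ Real.sqrt cη * Real.sqrt (η x) * ‖v‖ := by
    intro x v
    have h2 : ‖fderiv ℝ η x‖ ≤ Real.sqrt cη * Real.sqrt (η x) := by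
      have h3 := hηg x
      rw [norm_gradient_eq] at h3
      have h4 : ‖fderiv ℝ η x‖ = Real.sqrt (‖fderiv ℝ η x‖ ^ 2) :=
        (Real.sqrt_sq (norm_nonneg _)).symm
      rw [h4, ← Real.sqrt_mul hcη.le]
      exact Real.sqrt_le_sqrt h3
    calc |fderiv ℝ η x v| = ‖fderiv ℝ η x v‖ := (Real.norm_eq_abs _).symm
      _ ≤ ‖fderiv ℝ η x‖ * ‖v‖ := (fderiv ℝ η x).le_opNorm v
      _ ≤ _ := mul_le_mul_of_nonneg_right h2 (norm_nonneg v)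
  -- continuity
  have cξ : Continuous (fun x : E3 => Real.exp (-γ * dist x y)) :=
    Real.continuous_exp.comp (continuous_const.mul (continuous_id.dist continuous_const))
  have cxh : Continuous (xh γ y) := (xh_contDiff γ y).continuous
  have cu1 : ∀ j, Continuous (u1 ψ j) := fun j => (u1_contDiff hψ j).continuous
  have cu2 : ∀ i j, Continuous (u2 ψ i j) := fun i j => (u2_contDiff hψ i j).continuous
  have cη' : Continuous η := hη.continuous
  have hgradsq : ∀ x, ‖gradient ψ x‖ ^ 2 = ∑ j, (u1 ψ j x) ^ 2 := fun x => gradsq ψ x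
  -- integrability facts
  have IH' : ∀ i j, Integrable (fun x => (η x) ^ 2 * (u2 ψ i j x) ^ 2 *
      (Real.exp (-γ * dist x y)) ^ 2) := hIH
  have IL' : Integrable (fun x => η x * (∑ i, u2 ψ i i x) ^ 2 *
      (Real.exp (-γ * dist x y)) ^ 2) := hIL
  have IGj : ∀ j, Integrable (fun x => η x * (u1 ψ j x) ^ 2 * (Real.exp (-γ * dist x y)) ^ 2) := by
    intro j
    apply hIG.mono' (((cη'.mul ((cu1 j).pow 2)).mul (cξ.pow 2)).aestronglyMeasurable)
    apply ae_of_all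
    intro x
    have h1 : (u1 ψ j x) ^ 2 ≤ ∑ k, (u1 ψ k x) ^ 2 :=
      Finset.single_le_sum (f := fun k => (u1 ψ k x) ^ 2) (fun k _ => sq_nonneg _)
        (Finset.mem_univ j)
    simp only [Pi.mul_apply, Pi.pow_apply]
    rw [Real.norm_eq_abs, abs_of_nonneg
      (mul_nonneg (mul_nonneg (hη0 x) (sq_nonneg _)) (sq_nonneg _))]
    rw [hgradsq x]
    have := hη0 x
    nlinarith [sq_nonneg (Real.exp (-γ * dist x y)), mul_le_mul_of_nonneg_left h1 (hη0 x)]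
  have IGhat : ∀ j, Integrable (fun x => η x * (u1 ψ j x) ^ 2 * (xh γ y x) ^ 2) := by
    intro j
    apply (IGj j).mono' (((cη'.mul ((cu1 j).pow 2)).mul (cxh.pow 2)).aestronglyMeasurable)
    apply ae_of_all
    intro x
    have h2 := xh_le_xi γ y hγ0.le x
    have h3 := (xh_pos γ y x).le
    simp only [Pi.mul_apply, Pi.pow_apply]
    rw [Real.norm_eq_abs, abs_of_nonneg
      (mul_nonneg (mul_nonneg (hη0 x) (sq_nonneg _)) (sq_nonneg _))]
    nlinarith [mul_le_mul h2 h2 h3 (Real.exp_pos (-γ * dist x y)).le,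
      mul_nonneg (hη0 x) (sq_nonneg (u1 ψ j x))]
  have IHhat : ∀ i j, Integrable (fun x => (η x * xh γ y x) ^ 2 * u2 ψ i j x * u2 ψ i j x) := by
    intro i j
    apply (IH' i j).mono'
      ((((cη'.mul cxh).pow 2).mul (cu2 i j)).mul (cu2 i j)).aestronglyMeasurable
    apply ae_of_all
    intro x
    have h2 := xh_le_xi γ y hγ0.le x
    have h3 := (xh_pos γ y x).le
    have h4 := hη0 x
    simp only [Pi.mul_apply, Pi.pow_apply]
    rw [Real.norm_eq_abs, abs_of_nonneg
      (by nlinarith [sq_nonneg (η x * xh γ y x), sq_nonneg (u2 ψ i j x),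
        sq_nonneg (η x * xh γ y x * u2 ψ i j x)])]
    nlinarith [mul_le_mul h2 h2 h3 (Real.exp_pos (-γ * dist x y)).le,
      sq_nonneg (η x * u2 ψ i j x), sq_nonneg (u2 ψ i j x), sq_nonneg (η x)]
  -- the core estimate, for the compactly supported smooth weight, for each n
  have coreB : ∀ n : ℕ, (∑ i : Fin 3, ∑ j : Fin 3,
        ∫ x, wgt η γ y n x * u2 ψ i j x * u2 ψ i j x)
      ≤ 2 * (∫ x, η x * (∑ i, u2 ψ i i x) ^ 2 * (Real.exp (-γ * dist x y)) ^ 2)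
        + 24 * K ^ 2 * ∫ x, η x * ‖gradient ψ x‖ ^ 2 * (Real.exp (-γ * dist x y)) ^ 2 := by
    intro n
    have hWc : ContDiff ℝ 1 (wgt η γ y n) := wgt_contDiff y n hη
    have hWcs : HasCompactSupport (wgt η γ y n) := wgt_hasCompactSupport y n
    have cW := hWc.continuous
    have hW0 : ∀ x, 0 ≤ wgt η γ y n x := fun x => wgt_nonneg y n x
    -- integrable building blocks
    have Iu2 : ∀ a b c d : Fin 3,
        Integrable (fun x => wgt η γ y n x * u2 ψ a b x * u2 ψ c d x) := fun a b c d =>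
      integ_cc ((cW.mul (cu2 a b)).mul (cu2 c d)) (hWcs.mul_right.mul_right)
    have Ierr1 : ∀ (k c a b : Fin 3), Integrable (fun x =>
        fderiv ℝ (wgt η γ y n) x (EuclideanSpace.single k 1) * u1 ψ c x * u2 ψ a b x) :=
      fun k c a b => integ_cc (((fderiv_apply_cont hWc _).mul (cu1 c)).mul (cu2 a b))
        ((fderiv_apply_hcs hWcs _).mul_right.mul_right)
    have Ierr2 : ∀ (k c a b : Fin 3), Integrable (fun x =>
        fderiv ℝ (wgt η γ y n) x (EuclideanSpace.single k 1) * u2 ψ a b x * u1 ψ c x) :=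
      fun k c a b => integ_cc (((fderiv_apply_cont hWc _).mul (cu2 a b)).mul (cu1 c))
        ((fderiv_apply_hcs hWcs _).mul_right.mul_right)
    -- derivative bound for the weight
    have hdW : ∀ (k : Fin 3) (x : E3), |fderiv ℝ (wgt η γ y n) x (EuclideanSpace.single k 1)|
        ≤ K * (Real.sqrt (η x) * η x) * (rho γ y n x * xh γ y x) := by
      intro k x
      have h := wgt_fderiv_bound y n hγ0 hγ1 hκ hη hη0 hη1 hηf x (EuclideanSpace.single k 1)
      rw [EuclideanSpace.norm_single, norm_one, mul_one, ← hKdef] at h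
      exact h
    -- pointwise error estimate
    have errpt : ∀ (k c a b : Fin 3) (x : E3),
        |fderiv ℝ (wgt η γ y n) x (EuclideanSpace.single k 1)| * |u1 ψ c x| * |u2 ψ a b x|
        ≤ 2 * K ^ 2 * (η x * (u1 ψ c x) ^ 2 * (xh γ y x) ^ 2)
          + (1/8) * (wgt η γ y n x * u2 ψ a b x * u2 ψ a b x) := by
      intro k c a b x
      have h1 := hdW k x
      have hWval : wgt η γ y n x = (η x * rho γ y n x) * (η x * rho γ y n x) := rfl
      have e1 : (Real.sqrt (η x) * xh γ y x * |u1 ψ c x|) ^ 2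
          = η x * (u1 ψ c x) ^ 2 * (xh γ y x) ^ 2 := by
        rw [mul_pow, mul_pow, sq_abs, Real.sq_sqrt (hη0 x)]
        ring
      have e2 : (η x * rho γ y n x * |u2 ψ a b x|) ^ 2
          = wgt η γ y n x * u2 ψ a b x * u2 ψ a b x := by
        rw [mul_pow, mul_pow, sq_abs, hWval]
        ring
      have am := amgm K (Real.sqrt (η x) * xh γ y x * |u1 ψ c x|)
        (η x * rho γ y n x * |u2 ψ a b x|)
      rw [e1, e2] at am
      calc |fderiv ℝ (wgt η γ y n) x (EuclideanSpace.single k 1)| * |u1 ψ c x| * |u2 ψ a b x|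
          ≤ (K * (Real.sqrt (η x) * η x) * (rho γ y n x * xh γ y x)) * |u1 ψ c x|
            * |u2 ψ a b x| :=
            mul_le_mul_of_nonneg_right (mul_le_mul_of_nonneg_right h1 (abs_nonneg _))
              (abs_nonneg _)
        _ = K * ((Real.sqrt (η x) * xh γ y x * |u1 ψ c x|)
            * (η x * rho γ y n x * |u2 ψ a b x|)) := by ring
        _ ≤ _ := am
    -- integral error bound, version ∂W * u1 * u2
    have errint1 : ∀ (k c a b : Fin 3),
        |∫ x, fderiv ℝ (wgt η γ y n) x (EuclideanSpace.single k 1) * u1 ψ c x * u2 ψ a b x|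
        ≤ 2 * K ^ 2 * (∫ x, η x * (u1 ψ c x) ^ 2 * (xh γ y x) ^ 2)
          + (1/8) * ∫ x, wgt η γ y n x * u2 ψ a b x * u2 ψ a b x := by
      intro k c a b
      have Ibnd : Integrable (fun x => 2 * K ^ 2 * (η x * (u1 ψ c x) ^ 2 * (xh γ y x) ^ 2)
          + (1/8) * (wgt η γ y n x * u2 ψ a b x * u2 ψ a b x)) :=
        ((IGhat c).const_mul _).add ((Iu2 a b a b).const_mul _)
      calc |∫ x, fderiv ℝ (wgt η γ y n) x (EuclideanSpace.single k 1) * u1 ψ c x * u2 ψ a b x|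
          ≤ ∫ x, |fderiv ℝ (wgt η γ y n) x (EuclideanSpace.single k 1) * u1 ψ c x
            * u2 ψ a b x| := by
            simpa only [Real.norm_eq_abs] using norm_integral_le_integral_norm
              (μ := volume) (f := fun x =>
                fderiv ℝ (wgt η γ y n) x (EuclideanSpace.single k 1) * u1 ψ c x * u2 ψ a b x)
        _ ≤ ∫ x, (2 * K ^ 2 * (η x * (u1 ψ c x) ^ 2 * (xh γ y x) ^ 2)
            + (1/8) * (wgt η γ y n x * u2 ψ a b x * u2 ψ a b x)) := by
            refine integral_mono (Ierr1 k c a b).abs Ibnd (fun x => ?_)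
            rw [abs_mul, abs_mul]
            exact errpt k c a b x
        _ = _ := by
            rw [integral_add ((IGhat c).const_mul _) ((Iu2 a b a b).const_mul _),
              integral_const_mul, integral_const_mul]
    -- integral error bound, version ∂W * u2 * u1
    have errint2 : ∀ (k c a b : Fin 3),
        |∫ x, fderiv ℝ (wgt η γ y n) x (EuclideanSpace.single k 1) * u2 ψ a b x * u1 ψ c x|
        ≤ 2 * K ^ 2 * (∫ x, η x * (u1 ψ c x) ^ 2 * (xh γ y x) ^ 2)
          + (1/8) * ∫ x, wgt η γ y n x * u2 ψ a b x * u2 ψ a b x := by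
      intro k c a b
      have he : (fun x => fderiv ℝ (wgt η γ y n) x (EuclideanSpace.single k 1) * u2 ψ a b x
          * u1 ψ c x) = fun x => fderiv ℝ (wgt η γ y n) x (EuclideanSpace.single k 1)
          * u1 ψ c x * u2 ψ a b x := by
        funext x; ring
      rw [he]
      exact errint1 k c a b
    -- per-pair estimate
    have est : ∀ i j : Fin 3, (∫ x, wgt η γ y n x * u2 ψ i j x * u2 ψ i j x)
        ≤ (∫ x, wgt η γ y n x * u2 ψ j j x * u2 ψ i i x)
          + 4 * K ^ 2 * (∫ x, η x * (u1 ψ j x) ^ 2 * (xh γ y x) ^ 2)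
          + (1/8) * (∫ x, wgt η γ y n x * u2 ψ i i x * u2 ψ i i x)
          + (1/8) * (∫ x, wgt η γ y n x * u2 ψ i j x * u2 ψ i j x) := by
      intro i j
      have hid := ibp_identity (γ := γ) y n hψ hη i j
      have l1 := le_trans (le_abs_self _) (errint1 j j i i)
      have l2 := le_trans (neg_le_abs _) (errint2 i j i j)
      linarith [hid, l1, l2]
    -- nonnegativity of the diagonal blocks
    have Apos : ∀ i j : Fin 3, 0 ≤ ∫ x, wgt η γ y n x * u2 ψ i j x * u2 ψ i j x :=
      fun i j => integral_nonneg (fun x => by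
        simp only [Pi.zero_apply]
        nlinarith [mul_nonneg (hW0 x) (sq_nonneg (u2 ψ i j x))])
    -- sum the estimates
    have sum_est := Finset.sum_le_sum
      (fun i (_ : i ∈ Finset.univ) => Finset.sum_le_sum
        (fun j (_ : j ∈ Finset.univ) => est i j))
    simp only [Finset.sum_add_distrib] at sum_est
    -- identify the Laplacian term
    have Idiag : ∀ i : Fin 3, Integrable (fun x =>
        wgt η γ y n x * (∑ k, u2 ψ k k x) * u2 ψ i i x) := fun i =>
      integ_cc ((cW.mul (continuous_finset_sum _ (fun k _ => cu2 k k))).mul (cu2 i i))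
        (hWcs.mul_right.mul_right)
    have SL : (∑ i : Fin 3, ∑ j : Fin 3, ∫ x, wgt η γ y n x * u2 ψ j j x * u2 ψ i i x)
        = ∫ x, wgt η γ y n x * (∑ k, u2 ψ k k x) * (∑ k, u2 ψ k k x) := by
      have h1 : ∀ i : Fin 3, (∑ j : Fin 3, ∫ x, wgt η γ y n x * u2 ψ j j x * u2 ψ i i x)
          = ∫ x, wgt η γ y n x * (∑ k, u2 ψ k k x) * u2 ψ i i x := by
        intro i
        rw [← integral_finset_sum _ (fun j _ => Iu2 j j i i)]
        congr 1
        funext x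
        rw [← Finset.sum_mul, ← Finset.mul_sum]
      rw [Finset.sum_congr rfl (fun i _ => h1 i),
        ← integral_finset_sum _ (fun i _ => Idiag i)]
      congr 1
      funext x
      rw [← Finset.mul_sum]
    have SLle : (∫ x, wgt η γ y n x * (∑ k, u2 ψ k k x) * (∑ k, u2 ψ k k x))
        ≤ ∫ x, η x * (∑ i, u2 ψ i i x) ^ 2 * (Real.exp (-γ * dist x y)) ^ 2 := by
      refine integral_mono (integ_cc ((cW.mul (continuous_finset_sum _ (fun k _ => cu2 k k))).mul
        (continuous_finset_sum _ (fun k _ => cu2 k k))) (hWcs.mul_right.mul_right)) IL'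
        (fun x => ?_)
      have h1 := wgt_le_eta_xi_sq y n hγ0.le hη0 hη1 x
      nlinarith [mul_le_mul_of_nonneg_right h1 (sq_nonneg (∑ k, u2 ψ k k x))]
    -- gradient-type term
    have SGle : (∑ j : Fin 3, ∫ x, η x * (u1 ψ j x) ^ 2 * (xh γ y x) ^ 2)
        ≤ ∫ x, η x * ‖gradient ψ x‖ ^ 2 * (Real.exp (-γ * dist x y)) ^ 2 := by
      rw [← integral_finset_sum _ (fun j _ => IGhat j)]
      refine integral_mono (integrable_finset_sum _ (fun j _ => IGhat j)) hIG (fun x => ?_)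
      have h1 : (∑ j : Fin 3, η x * (u1 ψ j x) ^ 2 * (xh γ y x) ^ 2)
          = η x * (∑ j, (u1 ψ j x) ^ 2) * (xh γ y x) ^ 2 := by
        rw [← Finset.sum_mul, ← Finset.mul_sum]
      rw [h1, ← hgradsq x]
      have h2 := xh_le_xi γ y hγ0.le x
      have h3 := (xh_pos γ y x).le
      nlinarith [mul_nonneg (hη0 x) (sq_nonneg ‖gradient ψ x‖),
        mul_le_mul h2 h2 h3 (Real.exp_pos (-γ * dist x y)).le]
    -- diagonal bound
    have Sdiagle : (∑ i : Fin 3, ∫ x, wgt η γ y n x * u2 ψ i i x * u2 ψ i i x)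
        ≤ ∑ i : Fin 3, ∑ j : Fin 3, ∫ x, wgt η γ y n x * u2 ψ i j x * u2 ψ i j x :=
      Finset.sum_le_sum (fun i _ => Finset.single_le_sum
        (f := fun j => ∫ x, wgt η γ y n x * u2 ψ i j x * u2 ψ i j x)
        (fun j _ => Apos i j) (Finset.mem_univ i))
    -- constant-sum computations
    have c3 : ∀ z : ℝ, (∑ _i : Fin 3, z) = 3 * z := by
      intro z; simp [Finset.sum_const]; try ring
    have SG2 : (∑ i : Fin 3, ∑ j : Fin 3,
        4 * K ^ 2 * ∫ x, η x * (u1 ψ j x) ^ 2 * (xh γ y x) ^ 2)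
        = 12 * K ^ 2 * ∑ j : Fin 3, ∫ x, η x * (u1 ψ j x) ^ 2 * (xh γ y x) ^ 2 := by
      rw [c3]
      rw [Finset.mul_sum]
      rw [Finset.mul_sum]
      congr 1
      funext j
      ring
    have SD2 : (∑ i : Fin 3, ∑ _j : Fin 3,
        (1/8) * ∫ x, wgt η γ y n x * u2 ψ i i x * u2 ψ i i x)
        = (3/8) * ∑ i : Fin 3, ∫ x, wgt η γ y n x * u2 ψ i i x * u2 ψ i i x := by
      calc (∑ i : Fin 3, ∑ _j : Fin 3,
          (1/8) * ∫ x, wgt η γ y n x * u2 ψ i i x * u2 ψ i i x)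
          = ∑ i : Fin 3, 3 * ((1/8) * ∫ x, wgt η γ y n x * u2 ψ i i x * u2 ψ i i x) :=
            Finset.sum_congr rfl (fun i _ => c3 _)
        _ = (3/8) * ∑ i : Fin 3, ∫ x, wgt η γ y n x * u2 ψ i i x * u2 ψ i i x := by
            rw [Finset.mul_sum]
            exact Finset.sum_congr rfl (fun i _ => by ring)
    have SD3 : (∑ i : Fin 3, ∑ j : Fin 3,
        (1/8) * ∫ x, wgt η γ y n x * u2 ψ i j x * u2 ψ i j x)
        = (1/8) * ∑ i : Fin 3, ∑ j : Fin 3,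
          ∫ x, wgt η γ y n x * u2 ψ i j x * u2 ψ i j x := by
      rw [Finset.mul_sum]
      refine Finset.sum_congr rfl fun i _ => ?_
      rw [Finset.mul_sum]
    have SGle' : 12 * K ^ 2 * (∑ j : Fin 3, ∫ x, η x * (u1 ψ j x) ^ 2 * (xh γ y x) ^ 2)
        ≤ 12 * K ^ 2 * ∫ x, η x * ‖gradient ψ x‖ ^ 2 * (Real.exp (-γ * dist x y)) ^ 2 :=
      mul_le_mul_of_nonneg_left SGle (by positivity)
    linarith [sum_est, SL, SLle, SG2, SGle', SD2, SD3, Sdiagle]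
  -- limit n → ∞ via dominated convergence
  have haveA : ∀ i j : Fin 3, Filter.Tendsto
      (fun n : ℕ => ∫ x, wgt η γ y n x * u2 ψ i j x * u2 ψ i j x) atTop
      (nhds (∫ x, (η x * xh γ y x) ^ 2 * u2 ψ i j x * u2 ψ i j x)) := by
    intro i j
    apply tendsto_integral_of_dominated_convergence
      (bound := fun x => (η x) ^ 2 * (u2 ψ i j x) ^ 2 * (Real.exp (-γ * dist x y)) ^ 2)
    · intro n
      exact (((wgt_contDiff y n hη).continuous.mul (cu2 i j)).mul (cu2 i j)).aestronglyMeasurable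
    · exact IH' i j
    · intro n
      apply Filter.Eventually.of_forall
      intro x
      have h1 := wgt_le_eta_sq_xi_sq y n hγ0.le hη0 x
      have h2 := wgt_nonneg (η := η) (γ := γ) y n x
      rw [Real.norm_eq_abs, abs_of_nonneg (by nlinarith [sq_nonneg (u2 ψ i j x)])]
      nlinarith [mul_le_mul_of_nonneg_right h1 (sq_nonneg (u2 ψ i j x))]
    · apply Filter.Eventually.of_forall
      intro x
      exact ((wgt_tendsto (γ := γ) y x).mul_const _).mul_const _
  have Atend : Filter.Tendsto (fun n : ℕ => ∑ i : Fin 3, ∑ j : Fin 3,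
      ∫ x, wgt η γ y n x * u2 ψ i j x * u2 ψ i j x) atTop
      (nhds (∑ i : Fin 3, ∑ j : Fin 3,
        ∫ x, (η x * xh γ y x) ^ 2 * u2 ψ i j x * u2 ψ i j x)) :=
    tendsto_finset_sum _ (fun i _ => tendsto_finset_sum _ (fun j _ => haveA i j))
  have haveC : (∑ i : Fin 3, ∑ j : Fin 3,
      ∫ x, (η x * xh γ y x) ^ 2 * u2 ψ i j x * u2 ψ i j x)
      ≤ 2 * (∫ x, η x * (∑ i, u2 ψ i i x) ^ 2 * (Real.exp (-γ * dist x y)) ^ 2)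
        + 24 * K ^ 2 * ∫ x, η x * ‖gradient ψ x‖ ^ 2 * (Real.exp (-γ * dist x y)) ^ 2 :=
    le_of_tendsto Atend (Filter.Eventually.of_forall coreB)
  -- compare the exact weight with the smoothed weight
  have final1 : ∀ i j : Fin 3,
      (∫ x, (η x) ^ 2 * (u2 ψ i j x) ^ 2 * (Real.exp (-γ * dist x y)) ^ 2)
      ≤ Real.exp 1 ^ 2 * ∫ x, (η x * xh γ y x) ^ 2 * u2 ψ i j x * u2 ψ i j x := by
    intro i j
    rw [← integral_const_mul]
    refine integral_mono (IH' i j) ((IHhat i j).const_mul _) (fun x => ?_)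
    have h2 := xi_le_e_mul_xh γ y hγ0.le hγ1 x
    have h3 := (Real.exp_pos (-γ * dist x y)).le
    have h4 := (xh_pos γ y x).le
    have h5 : (Real.exp (-γ * dist x y)) ^ 2 ≤ (Real.exp 1 * xh γ y x) ^ 2 := by
      nlinarith [Real.exp_pos (1:ℝ)]
    calc (η x) ^ 2 * (u2 ψ i j x) ^ 2 * (Real.exp (-γ * dist x y)) ^ 2
        ≤ (η x) ^ 2 * (u2 ψ i j x) ^ 2 * (Real.exp 1 * xh γ y x) ^ 2 :=
          mul_le_mul_of_nonneg_left h5 (mul_nonneg (sq_nonneg _) (sq_nonneg _))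
      _ = Real.exp 1 ^ 2 * ((η x * xh γ y x) ^ 2 * u2 ψ i j x * u2 ψ i j x) := by ring
  have G0 : 0 ≤ ∫ x, η x * ‖gradient ψ x‖ ^ 2 * (Real.exp (-γ * dist x y)) ^ 2 :=
    integral_nonneg (fun x => mul_nonneg (mul_nonneg (hη0 x) (sq_nonneg _)) (sq_nonneg _))
  have L0 : 0 ≤ ∫ x, η x * (∑ i, u2 ψ i i x) ^ 2 * (Real.exp (-γ * dist x y)) ^ 2 :=
    integral_nonneg (fun x => mul_nonneg (mul_nonneg (hη0 x) (sq_nonneg _)) (sq_nonneg _))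
  have step := Finset.sum_le_sum (fun i (_ : i ∈ Finset.univ) =>
    Finset.sum_le_sum (fun j (_ : j ∈ (Finset.univ : Finset (Fin 3))) => final1 i j))
  have hfac : (∑ i : Fin 3, ∑ j : Fin 3, Real.exp 1 ^ 2 *
      ∫ x, (η x * xh γ y x) ^ 2 * u2 ψ i j x * u2 ψ i j x)
      = Real.exp 1 ^ 2 * ∑ i : Fin 3, ∑ j : Fin 3,
        ∫ x, (η x * xh γ y x) ^ 2 * u2 ψ i j x * u2 ψ i j x := by
    rw [Finset.mul_sum]
    refine Finset.sum_congr rfl fun i _ => ?_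
    rw [Finset.mul_sum]
  have e2pos : (0:ℝ) ≤ Real.exp 1 ^ 2 := sq_nonneg _
  have hKsq : (0:ℝ) ≤ K ^ 2 := sq_nonneg K
  have inner : 2 * (∫ x, η x * (∑ i, u2 ψ i i x) ^ 2 * (Real.exp (-γ * dist x y)) ^ 2)
      + 24 * K ^ 2 * (∫ x, η x * ‖gradient ψ x‖ ^ 2 * (Real.exp (-γ * dist x y)) ^ 2)
      ≤ (24 * K ^ 2 + 2) * ((∫ x, η x * ‖gradient ψ x‖ ^ 2 * (Real.exp (-γ * dist x y)) ^ 2)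
        + ∫ x, η x * (∑ i, u2 ψ i i x) ^ 2 * (Real.exp (-γ * dist x y)) ^ 2) := by
    nlinarith [mul_nonneg hKsq L0, G0]
  show (∑ i : Fin 3, ∑ j : Fin 3,
      ∫ x, (η x) ^ 2 * (u2 ψ i j x) ^ 2 * (Real.exp (-γ * dist x y)) ^ 2)
    ≤ Real.exp 1 ^ 2 * (24 * K ^ 2 + 2) *
      ((∫ x, η x * ‖gradient ψ x‖ ^ 2 * (Real.exp (-γ * dist x y)) ^ 2) +
        ∫ x, η x * (∑ i, u2 ψ i i x) ^ 2 * (Real.exp (-γ * dist x y)) ^ 2)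
  calc (∑ i : Fin 3, ∑ j : Fin 3,
      ∫ x, (η x) ^ 2 * (u2 ψ i j x) ^ 2 * (Real.exp (-γ * dist x y)) ^ 2)
      ≤ ∑ i : Fin 3, ∑ j : Fin 3, Real.exp 1 ^ 2 *
        ∫ x, (η x * xh γ y x) ^ 2 * u2 ψ i j x * u2 ψ i j x := step
    _ = Real.exp 1 ^ 2 * ∑ i : Fin 3, ∑ j : Fin 3,
        ∫ x, (η x * xh γ y x) ^ 2 * u2 ψ i j x * u2 ψ i j x := hfac
    _ ≤ Real.exp 1 ^ 2 * (2 * (∫ x, η x * (∑ i, u2 ψ i i x) ^ 2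
          * (Real.exp (-γ * dist x y)) ^ 2)
        + 24 * K ^ 2 * ∫ x, η x * ‖gradient ψ x‖ ^ 2 * (Real.exp (-γ * dist x y)) ^ 2) :=
        mul_le_mul_of_nonneg_left haveC e2pos
    _ ≤ Real.exp 1 ^ 2 * ((24 * K ^ 2 + 2) *
        ((∫ x, η x * ‖gradient ψ x‖ ^ 2 * (Real.exp (-γ * dist x y)) ^ 2) +
          ∫ x, η x * (∑ i, u2 ψ i i x) ^ 2 * (Real.exp (-γ * dist x y)) ^ 2)) :=
        mul_le_mul_of_nonneg_left inner e2pos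
    _ = Real.exp 1 ^ 2 * (24 * K ^ 2 + 2) *
        ((∫ x, η x * ‖gradient ψ x‖ ^ 2 * (Real.exp (-γ * dist x y)) ^ 2) +
          ∫ x, η x * (∑ i, u2 ψ i i x) ^ 2 * (Real.exp (-γ * dist x y)) ^ 2) := by ring
end
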